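/- Fix T ∈ ℕ, σ > 0, ρ ∈ [0, 1] and t ∈ (0, 1]. Let X₁, …, X_T and Z₁, …, Z_T be centered square-integrable real random variables on a common probability space with E[X_i X_j] = ρ^{|i−j|} σ² for all i, j, with E[Z_j X_i] = 0 for all i, j, and E[Z_j Z_k] = 0 for j ≠ k. Define Δ_{FMD,j} := √(1 + Σ_{i=1}^{j−1} 2^{j−1−i} ρ^{2(j−i)}) (so Δ_{FMD,1} = 1), and define reconstructions by X̂₁ := √t · X₁ + Z₁ and, for 2 ≤ j ≤ T, X̂_j := Σ_{i=1}^{j−1} (Δ_{FMD,i} ρ^{j−i} / Δ_{FMD,j}) · X̂_i + (√t / Δ_{FMD,j}) · X_j + Z_j. Then for every 1 ≤ j ≤ T, E[X_j X̂_j] = Δ_{FMD,j} · √t · σ². Consequently, if in addition E[X̂_j²] = σ², then E[(X_j − X̂_j)²] = 2(1 − Δ_{FMD,j} √t) σ². In particular for ρ = 1 one has Δ_{FMD,j} = 2^{(j−1)/2}, so the correlation gain grows exponentially in the frame index — the framewise-marginal decoder recovers from early errors. -/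

import Mathlib

open MeasureTheory

/-- The correlation gain `Δ_{FMD,j} = √(1 + Σ_{i=1}^{j−1} 2^{j−1−i} ρ^{2(j−i)})` of the
zero framewise-marginal perception loss decoder at frame `j` (so `Δ_{FMD,1} = 1`). -/
noncomputable def ΔFMD (ρ : ℝ) (j : ℕ) : ℝ :=
  Real.sqrt (1 + ∑ i ∈ Finset.Icc 1 (j - 1), (2 : ℝ) ^ (j - 1 - i) * ρ ^ (2 * (j - i)))

/-- The square of the correlation gain, as an explicit sum. -/
noncomputable def D2 (ρ : ℝ) (j : ℕ) : ℝ :=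
  1 + ∑ i ∈ Finset.Icc 1 (j - 1), (2 : ℝ) ^ (j - 1 - i) * ρ ^ (2 * (j - i))

lemma one_le_D2 (ρ : ℝ) (j : ℕ) : 1 ≤ D2 ρ j := by
  have h : 0 ≤ ∑ i ∈ Finset.Icc 1 (j - 1), (2 : ℝ) ^ (j - 1 - i) * ρ ^ (2 * (j - i)) := by
    refine Finset.sum_nonneg fun i _ => ?_
    have h1 : (0:ℝ) ≤ ρ ^ (2 * (j - i)) := by
      rw [mul_comm, pow_mul]; positivity
    positivity
  unfold D2; linarith

lemma ΔFMD_eq_sqrt (ρ : ℝ) (j : ℕ) : ΔFMD ρ j = Real.sqrt (D2 ρ j) := rfl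

lemma ΔFMD_sq (ρ : ℝ) (j : ℕ) : ΔFMD ρ j ^ 2 = D2 ρ j := by
  rw [ΔFMD_eq_sqrt]
  exact Real.sq_sqrt (le_trans zero_le_one (one_le_D2 ρ j))

lemma ΔFMD_pos (ρ : ℝ) (j : ℕ) : 0 < ΔFMD ρ j := by
  rw [ΔFMD_eq_sqrt]
  exact Real.sqrt_pos.mpr (lt_of_lt_of_le one_pos (one_le_D2 ρ j))

lemma D2_succ (ρ : ℝ) (m : ℕ) : D2 ρ (m + 2) = 1 + ρ ^ 2 * (2 * D2 ρ (m + 1) - 1) := by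
  have hsplit : Finset.Icc 1 (m + 1) = insert (m + 1) (Finset.Icc 1 m) :=
    (Finset.insert_Icc_right_eq_Icc_add_one (by omega)).symm
  have key : ∀ i ∈ Finset.Icc 1 m,
      (2:ℝ) ^ (m + 1 - i) * ρ ^ (2 * (m + 2 - i))
        = (2 * ρ ^ 2) * ((2:ℝ) ^ (m - i) * ρ ^ (2 * (m + 1 - i))) := by
    intro i hi
    simp only [Finset.mem_Icc] at hi
    obtain ⟨d, rfl⟩ : ∃ d, m = i + d := ⟨m - i, by omega⟩
    rw [show 2 * (i + d + 2 - i) = 2 * d + 4 from by omega,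
      show 2 * (i + d + 1 - i) = 2 * d + 2 from by omega,
      show i + d + 1 - i = d + 1 from by omega, show i + d - i = d from by omega,
      pow_succ, pow_add, pow_add]
    ring
  unfold D2
  rw [show m + 2 - 1 = m + 1 from by omega]
  simp only [Nat.add_sub_cancel]
  rw [hsplit, Finset.sum_insert (by simp), Finset.sum_congr rfl key, ← Finset.mul_sum]
  rw [show m + 1 - (m + 1) = 0 from by omega, show 2 * (m + 2 - (m + 1)) = 2 from by omega]
  ring

lemma D2_eq (ρ : ℝ) : ∀ j : ℕ,
    D2 ρ j = 1 + ∑ i ∈ Finset.Icc 1 (j - 1), D2 ρ i * ρ ^ (2 * (j - i)) := by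
  intro j
  induction j with
  | zero => simp [D2]
  | succ n ih =>
    rcases Nat.eq_zero_or_pos n with rfl | hn
    · simp [D2]
    · obtain ⟨m, rfl⟩ : ∃ m, n = m + 1 := ⟨n - 1, by omega⟩
      have hsplit : Finset.Icc 1 (m + 1) = insert (m + 1) (Finset.Icc 1 m) :=
        (Finset.insert_Icc_right_eq_Icc_add_one (by omega)).symm
      have key : ∀ i ∈ Finset.Icc 1 m,
          D2 ρ i * ρ ^ (2 * (m + 1 + 1 - i)) = ρ ^ 2 * (D2 ρ i * ρ ^ (2 * (m + 1 - i))) := by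
        intro i hi
        simp only [Finset.mem_Icc] at hi
        have e2 : 2 * (m + 1 + 1 - i) = 2 * (m + 1 - i) + 2 := by omega
        rw [e2, pow_add]; ring
      rw [show m + 1 + 1 - 1 = m + 1 from by omega] at *
      rw [show m + 1 - 1 = m from by omega] at ih
      rw [show (m + 1 + 1 : ℕ) = m + 2 from rfl, D2_succ ρ m]
      rw [show (m + 2 : ℕ) = m + 1 + 1 from rfl, hsplit,
        Finset.sum_insert (by simp), Finset.sum_congr rfl key, ← Finset.mul_sum,
        show 2 * (m + 1 + 1 - (m + 1)) = 2 from by omega]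
      rw [ih]; ring

lemma ΔFMD_identity (ρ : ℝ) (j : ℕ) :
    ΔFMD ρ j ^ 2 = 1 + ∑ i ∈ Finset.Icc 1 (j - 1), ΔFMD ρ i ^ 2 * ρ ^ (2 * (j - i)) := by
  rw [ΔFMD_sq, D2_eq]
  congr 1
  exact Finset.sum_congr rfl fun i _ => by rw [ΔFMD_sq]

lemma ΔFMD_one (ρ : ℝ) : ΔFMD ρ 1 = 1 := by
  simp [ΔFMD]

lemma int_mul {Ω : Type*} [MeasurableSpace Ω] {P : Measure Ω} {f g : Ω → ℝ}
    (hf : MemLp f 2 P) (hg : MemLp g 2 P) : Integrable (fun ω => f ω * g ω) P := by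
  have h : MemLp (f • g) 1 P := MemLp.smul (r := 1) hg hf
  rw [memLp_one_iff_integrable] at h
  exact h

/-- Per-frame correlation and distortion of the 0-PLF-FMD reconstructions
`X̂₁ = √t·X₁ + Z₁`,
`X̂_j = Σ_{i=1}^{j−1} (Δ_{FMD,i} ρ^{j−i}/Δ_{FMD,j})·X̂_i + (√t/Δ_{FMD,j})·X_j + Z_j`
for a stationary source with covariance `E[X_i X_j] = ρ^{|i−j|}σ²` and orthogonal noises:
for every `1 ≤ j ≤ T`, `E[X_j X̂_j] = Δ_{FMD,j}·√t·σ²`, and if moreover `E[X̂_j²] = σ²`,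
then `E[(X_j − X̂_j)²] = 2(1 − Δ_{FMD,j}√t)σ²`.  For `ρ = 1`, `Δ_{FMD,j} = 2^{(j−1)/2}`
grows exponentially: the framewise-marginal decoder recovers from early errors. -/
theorem statement14 {Ω : Type*} [MeasurableSpace Ω] (P : Measure Ω) [IsProbabilityMeasure P]
    (T : ℕ) (σ ρ t : ℝ) (hσ : 0 < σ) (hρ : ρ ∈ Set.Icc (0 : ℝ) 1) (ht : t ∈ Set.Ioc (0 : ℝ) 1)
    (X Z Xhat : ℕ → Ω → ℝ)
    (hXmem : ∀ j, 1 ≤ j → j ≤ T → MemLp (X j) 2 P)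
    (hZmem : ∀ j, 1 ≤ j → j ≤ T → MemLp (Z j) 2 P)
    (hXcentered : ∀ j, 1 ≤ j → j ≤ T → ∫ ω, X j ω ∂P = 0)
    (hZcentered : ∀ j, 1 ≤ j → j ≤ T → ∫ ω, Z j ω ∂P = 0)
    (hXX : ∀ i j, 1 ≤ i → i ≤ T → 1 ≤ j → j ≤ T →
      ∫ ω, X i ω * X j ω ∂P = ρ ^ ((i : ℤ) - (j : ℤ)).natAbs * σ ^ 2)
    (hZX : ∀ i j, 1 ≤ i → i ≤ T → 1 ≤ j → j ≤ T → ∫ ω, Z j ω * X i ω ∂P = 0)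
    (hZZ : ∀ j k, 1 ≤ j → j ≤ T → 1 ≤ k → k ≤ T → j ≠ k → ∫ ω, Z j ω * Z k ω ∂P = 0)
    (hXhat1 : Xhat 1 = fun ω => Real.sqrt t * X 1 ω + Z 1 ω)
    (hXhatrec : ∀ j, 2 ≤ j → j ≤ T → Xhat j = fun ω =>
      (∑ i ∈ Finset.Icc 1 (j - 1), (ΔFMD ρ i * ρ ^ (j - i) / ΔFMD ρ j) * Xhat i ω)
        + (Real.sqrt t / ΔFMD ρ j) * X j ω + Z j ω) :
    ∀ j, 1 ≤ j → j ≤ T →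
      (∫ ω, X j ω * Xhat j ω ∂P = ΔFMD ρ j * Real.sqrt t * σ ^ 2) ∧
      ((∫ ω, Xhat j ω ^ 2 ∂P = σ ^ 2) →
        ∫ ω, (X j ω - Xhat j ω) ^ 2 ∂P = 2 * (1 - ΔFMD ρ j * Real.sqrt t) * σ ^ 2) := by
  have habs : ∀ a b : ℕ, b ≤ a → (((a:ℕ):ℤ) - ((b:ℕ):ℤ)).natAbs = a - b := by
    intro a b h; omega
  have main : ∀ j, 1 ≤ j → j ≤ T → MemLp (Xhat j) 2 P ∧
      ∀ k, j ≤ k → k ≤ T →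
        ∫ ω, X k ω * Xhat j ω ∂P = ΔFMD ρ j * Real.sqrt t * ρ ^ (k - j) * σ ^ 2 := by
    intro j
    induction j using Nat.strong_induction_on with
    | _ j ih =>
      intro hj1 hjT
      rcases eq_or_lt_of_le hj1 with h1 | hj2
      · obtain rfl : j = 1 := h1.symm
        constructor
        · rw [hXhat1]
          exact ((hXmem 1 le_rfl hjT).const_mul (Real.sqrt t)).add (hZmem 1 le_rfl hjT)
        · intro k hk1 hkT
          rw [hXhat1]
          have hXk := hXmem k hk1 hkT
          have hI1 : Integrable (fun ω => X k ω * (Real.sqrt t * X 1 ω)) P :=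
            int_mul hXk ((hXmem 1 le_rfl hjT).const_mul _)
          have hI2 : Integrable (fun ω => X k ω * Z 1 ω) P := int_mul hXk (hZmem 1 le_rfl hjT)
          simp only [mul_add]
          rw [integral_add hI1 hI2]
          have e1 : ∫ ω, X k ω * (Real.sqrt t * X 1 ω) ∂P
              = Real.sqrt t * ∫ ω, X k ω * X 1 ω ∂P := by
            simp_rw [show ∀ ω, X k ω * (Real.sqrt t * X 1 ω)
              = Real.sqrt t * (X k ω * X 1 ω) from fun ω => by ring]
            exact integral_const_mul _ _
          have e2 : ∫ ω, X k ω * Z 1 ω ∂P = 0 := by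
            simp_rw [fun ω => mul_comm (X k ω) (Z 1 ω)]
            exact hZX k 1 hk1 hkT le_rfl hjT
          rw [e1, e2, hXX k 1 hk1 hkT le_rfl hjT, habs k 1 hk1, ΔFMD_one]
          ring
      · have hj2 : 2 ≤ j := hj2
        have hrec := hXhatrec j hj2 hjT
        have hmem_i : ∀ i ∈ Finset.Icc 1 (j - 1), MemLp (Xhat i) 2 P := by
          intro i hi
          simp only [Finset.mem_Icc] at hi
          exact (ih i (by omega) hi.1 (by omega)).1
        have hsum_mem : MemLp (fun ω => ∑ i ∈ Finset.Icc 1 (j - 1),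
            (ΔFMD ρ i * ρ ^ (j - i) / ΔFMD ρ j) * Xhat i ω) 2 P :=
          memLp_finset_sum _ fun i hi => (hmem_i i hi).const_mul _
        have hXhatj_mem : MemLp (Xhat j) 2 P := by
          rw [hrec]
          exact (hsum_mem.add ((hXmem j hj1 hjT).const_mul _)).add (hZmem j hj1 hjT)
        refine ⟨hXhatj_mem, ?_⟩
        intro k hkj hkT
        have hk1 : 1 ≤ k := le_trans hj1 hkj
        have hXk := hXmem k hk1 hkT
        rw [hrec]
        have hint_i : ∀ i ∈ Finset.Icc 1 (j - 1),
            Integrable (fun ω => X k ω * ((ΔFMD ρ i * ρ ^ (j - i) / ΔFMD ρ j) * Xhat i ω)) P :=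
          fun i hi => int_mul hXk ((hmem_i i hi).const_mul _)
        have hIsum : Integrable (fun ω => X k ω * ∑ i ∈ Finset.Icc 1 (j - 1),
            (ΔFMD ρ i * ρ ^ (j - i) / ΔFMD ρ j) * Xhat i ω) P := by
          simp_rw [Finset.mul_sum]
          exact integrable_finset_sum _ hint_i
        have hIX : Integrable (fun ω => X k ω * ((Real.sqrt t / ΔFMD ρ j) * X j ω)) P :=
          int_mul hXk ((hXmem j hj1 hjT).const_mul _)
        have hIZ : Integrable (fun ω => X k ω * Z j ω) P := int_mul hXk (hZmem j hj1 hjT)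
        have hI12 : Integrable (fun ω => (X k ω * ∑ i ∈ Finset.Icc 1 (j - 1),
            (ΔFMD ρ i * ρ ^ (j - i) / ΔFMD ρ j) * Xhat i ω)
            + X k ω * ((Real.sqrt t / ΔFMD ρ j) * X j ω)) P := hIsum.add hIX
        simp only [mul_add]
        rw [integral_add hI12 hIZ, integral_add hIsum hIX]
        have e2 : ∫ ω, X k ω * Z j ω ∂P = 0 := by
          simp_rw [fun ω => mul_comm (X k ω) (Z j ω)]
          exact hZX k j hk1 hkT hj1 hjT
        have e1 : ∫ ω, X k ω * ((Real.sqrt t / ΔFMD ρ j) * X j ω) ∂P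
            = (Real.sqrt t / ΔFMD ρ j) * (ρ ^ (k - j) * σ ^ 2) := by
          simp_rw [show ∀ ω, X k ω * ((Real.sqrt t / ΔFMD ρ j) * X j ω)
            = (Real.sqrt t / ΔFMD ρ j) * (X k ω * X j ω) from fun ω => by ring]
          rw [integral_const_mul, hXX k j hk1 hkT hj1 hjT, habs k j hkj]
        have e0 : ∫ ω, X k ω * ∑ i ∈ Finset.Icc 1 (j - 1),
            (ΔFMD ρ i * ρ ^ (j - i) / ΔFMD ρ j) * Xhat i ω ∂P
            = (Real.sqrt t * σ ^ 2 * ρ ^ (k - j) / ΔFMD ρ j)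
              * ∑ i ∈ Finset.Icc 1 (j - 1), ΔFMD ρ i ^ 2 * ρ ^ (2 * (j - i)) := by
          simp_rw [Finset.mul_sum]
          rw [integral_finset_sum _ hint_i]
          refine Finset.sum_congr rfl fun i hi => ?_
          simp only [Finset.mem_Icc] at hi
          have hi1 : 1 ≤ i := hi.1
          have hij : i ≤ j - 1 := hi.2
          have hIm : ∫ ω, X k ω * ((ΔFMD ρ i * ρ ^ (j - i) / ΔFMD ρ j) * Xhat i ω) ∂P
              = (ΔFMD ρ i * ρ ^ (j - i) / ΔFMD ρ j) * ∫ ω, X k ω * Xhat i ω ∂P := by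
            simp_rw [show ∀ ω, X k ω * ((ΔFMD ρ i * ρ ^ (j - i) / ΔFMD ρ j) * Xhat i ω)
              = (ΔFMD ρ i * ρ ^ (j - i) / ΔFMD ρ j) * (X k ω * Xhat i ω) from fun ω => by ring]
            exact integral_const_mul _ _
          rw [hIm, (ih i (by omega) hi1 (by omega)).2 k (by omega) hkT]
          have hexp : ρ ^ (j - i) * ρ ^ (k - i) = ρ ^ (k - j) * ρ ^ (2 * (j - i)) := by
            rw [← pow_add, ← pow_add]
            congr 1
            omega
          have hΔ : (ΔFMD ρ j) ≠ 0 := (ΔFMD_pos ρ j).ne'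
          field_simp
          linear_combination (ΔFMD ρ i) ^ 2 * Real.sqrt t * hexp
        rw [e0, e1, e2]
        have hid := ΔFMD_identity ρ j
        have hΔ : (ΔFMD ρ j) ≠ 0 := (ΔFMD_pos ρ j).ne'
        field_simp
        linear_combination (-1 : ℝ) * Real.sqrt t * σ ^ 2 * ρ ^ (k - j) * hid
  intro j hj1 hjT
  obtain ⟨hmem, hcor⟩ := main j hj1 hjT
  have hcor' : ∫ ω, X j ω * Xhat j ω ∂P = ΔFMD ρ j * Real.sqrt t * σ ^ 2 := by
    have := hcor j le_rfl hjT
    simpa using this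
  refine ⟨hcor', fun hσhat => ?_⟩
  have hXj := hXmem j hj1 hjT
  have hI1 : Integrable (fun ω => X j ω * X j ω) P := int_mul hXj hXj
  have hI2 : Integrable (fun ω => X j ω * Xhat j ω) P := int_mul hXj hmem
  have hI3 : Integrable (fun ω => Xhat j ω ^ 2) P := hmem.integrable_sq
  have hXjsq : ∫ ω, X j ω * X j ω ∂P = σ ^ 2 := by
    have := hXX j j hj1 hjT hj1 hjT
    simpa using this
  simp_rw [show ∀ ω, (X j ω - Xhat j ω) ^ 2
    = (X j ω * X j ω - 2 * (X j ω * Xhat j ω)) + Xhat j ω ^ 2 from fun ω => by ring]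
  have hI2' : Integrable (fun ω => 2 * (X j ω * Xhat j ω)) P := hI2.const_mul 2
  have hI12 : Integrable (fun ω => X j ω * X j ω - 2 * (X j ω * Xhat j ω)) P := hI1.sub hI2'
  rw [integral_add hI12 hI3, integral_sub hI1 hI2',
    integral_const_mul, hcor', hσhat, hXjsq]
  ring
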